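/- Let G be a cubic graph with a perfect matching M and let t ≥ 1 be an integer. If the (2t+1)-regular multigraph H = G + (2t−2)M has a perfect matching N such that H − N is bipartite, then G has a perfect matching N′ such that G − N′ is bipartite; consequently G is class 1 (admits a proper 3-edge-coloring). -/

import Mathlib

/-!
Basic theory of finite multigraphs (parallel edges allowed, no loops),
nowhere-zero `r`-flows, the circular flow number, proper edge colorings,
the chromatic index, class 1 / class 2, perfect matchings, edge cuts,
`r`-bipartitions, and the operation of adding parallel copies of a matching.
-/

/-- A finite multigraph: a finite type of vertices, a finite type of edges,
each edge having an (ordered, for reference purposes) pair of distinct endpoints.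
Parallel edges are allowed; loops are excluded. -/
structure Multigraph : Type 1 where
  V : Type
  E : Type
  vFinite : Finite V
  eFinite : Finite E
  ends : E → V × V
  no_loop : ∀ e, (ends e).1 ≠ (ends e).2

namespace Multigraph

variable (G : Multigraph)

instance : Finite G.V := G.vFinite
instance : Finite G.E := G.eFinite

/-- The first endpoint of an edge (w.r.t. the reference orientation). -/
def tail (e : G.E) : G.V := (G.ends e).1

/-- The second endpoint of an edge (w.r.t. the reference orientation). -/
def head (e : G.E) : G.V := (G.ends e).2

/-- `v` is an endpoint of the edge `e`. -/
def Inc (v : G.V) (e : G.E) : Prop := G.tail e = v ∨ G.head e = v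

open Classical in
/-- The endpoint of `e` other than `v`. -/
noncomputable def otherEnd (e : G.E) (v : G.V) : G.V :=
  if G.tail e = v then G.head e else G.tail e

/-- The degree of a vertex: the number of edges incident with it
(no loops, so no edge is counted twice). -/
noncomputable def degree (v : G.V) : ℕ := Nat.card {e : G.E // G.Inc v e}

/-- `G` is `k`-regular. -/
def IsRegular (k : ℕ) : Prop := ∀ v, G.degree v = k

/-- The maximum degree `Δ(G)`. -/
noncomputable def maxDegree : ℕ := sSup (Set.range G.degree)

/-- Two distinct edges are adjacent if they share an endpoint. -/
def EAdj (e e' : G.E) : Prop := e ≠ e' ∧ ∃ v, G.Inc v e ∧ G.Inc v e'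

/-- A proper edge coloring with `k` colors: adjacent edges get distinct colors. -/
def IsProperEdgeColoring {k : ℕ} (c : G.E → Fin k) : Prop :=
  ∀ e e', G.EAdj e e' → c e ≠ c e'

/-- The chromatic index `χ'(G)`. -/
noncomputable def chromaticIndex : ℕ :=
  sInf {k | ∃ c : G.E → Fin k, G.IsProperEdgeColoring c}

/-- `G` is class 1 if `χ'(G) = Δ(G)`. -/
def IsClass1 : Prop := G.chromaticIndex = G.maxDegree

/-- `G` is class 2 if it is not class 1. -/
def IsClass2 : Prop := ¬ G.IsClass1

/-- A nowhere-zero `r`-flow: the orientation `D` is encoded by the signs of `f`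
(a negative value means the edge is used against its reference direction), every
edge has absolute flow value in `[1, r-1]`, and Kirchhoff's law holds at every
vertex. -/
def IsNZFlow (r : ℝ) (f : G.E → ℝ) : Prop :=
  (∀ e, 1 ≤ |f e| ∧ |f e| ≤ r - 1) ∧
  ∀ v : G.V, ∑ᶠ e ∈ {e | G.tail e = v}, f e = ∑ᶠ e ∈ {e | G.head e = v}, f e

/-- `G` admits a nowhere-zero `r`-flow. -/
def HasNZFlow (r : ℝ) : Prop := ∃ f, G.IsNZFlow r f

/-- The circular flow number `φ_c(G)`, as an extended real number:
the infimum of all real `r ≥ 2` such that `G` has a nowhere-zero `r`-flow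
(`+∞` if there is no such `r`, e.g. if `G` has a bridge). -/
noncomputable def flowNumber : EReal :=
  sInf {x : EReal | ∃ r : ℝ, x = (r : EReal) ∧ 2 ≤ r ∧ G.HasNZFlow r}

/-- A perfect matching: every vertex is incident with exactly one edge of `M`. -/
def IsPerfectMatching (M : Set G.E) : Prop :=
  ∀ v, ∃! e, e ∈ M ∧ G.Inc v e

/-- `G` is bipartite: the vertices can be 2-colored with every edge bichromatic. -/
def IsBipartite : Prop :=
  ∃ s : Set G.V, ∀ e, ¬ (G.tail e ∈ s ↔ G.head e ∈ s)

/-- The edge cut `∂_G(X)`: edges with exactly one end in `X`. -/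
def cut (X : Set G.V) : Set G.E := {e | ¬ (G.tail e ∈ X ↔ G.head e ∈ X)}

/-- Add, for each `i : Fin k`, one new parallel copy of each edge of `M i`. -/
noncomputable def addEdgeFamily {k : ℕ} (M : Fin k → Set G.E) : Multigraph where
  V := G.V
  E := G.E ⊕ ((i : Fin k) × ↥(M i))
  vFinite := by infer_instance
  eFinite := by infer_instance
  ends := Sum.elim G.ends (fun p => G.ends p.2.1)
  no_loop := by
    rintro (e | ⟨i, e⟩)
    · exact G.no_loop e
    · exact G.no_loop e.1

/-- `G + kM`: add `k` new parallel copies of each edge of `M`. -/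
noncomputable def addCopies (M : Set G.E) (k : ℕ) : Multigraph :=
  G.addEdgeFamily (fun _ : Fin k => M)

/-- Delete a set of edges. -/
noncomputable def deleteEdges (M : Set G.E) : Multigraph where
  V := G.V
  E := {e : G.E // e ∉ M}
  vFinite := G.vFinite
  eFinite := by infer_instance
  ends := fun e => G.ends e.1
  no_loop := fun e => G.no_loop e.1

/-- Vertex adjacency (there is an edge between `u` and `v`). -/
def VAdj (u v : G.V) : Prop := ∃ e, G.ends e = (u, v) ∨ G.ends e = (v, u)

/-- Reachability by walks. -/
def Reach : G.V → G.V → Prop := Relation.ReflTransGen G.VAdj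

/-- `G` is connected. -/
def Connected : Prop := ∀ u v, G.Reach u v

/-- An edge is a bridge if its ends are not joined by a walk avoiding it. -/
def IsBridge (e : G.E) : Prop :=
  ¬ (G.deleteEdges {e}).Reach (G.tail e) (G.head e)

/-- `G` is bridgeless. -/
def Bridgeless : Prop := ∀ e, ¬ G.IsBridge e

/-- An `r`-bipartition of (the vertex set of) a cubic graph. -/
def IsRBipartition (r : ℝ) (B W : Set G.V) : Prop :=
  B ∪ W = Set.univ ∧ B ∩ W = ∅ ∧
  ∀ X : Set G.V,
    (r / (r - 2)) * |((X ∩ B).ncard : ℝ) - ((X ∩ W).ncard : ℝ)| ≤ ((G.cut X).ncard : ℝ)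

/-- A cubic graph `G` with a perfect matching `M` has the `M`-class-2 property
if `G + (2t-2)M` is class 2 for every integer `t ≥ 1`. -/
def MClass2Property (M : Set G.E) : Prop :=
  ∀ t : ℕ, 1 ≤ t → (G.addCopies M (2 * t - 2)).IsClass2

/-- A cubic graph `G` with a perfect matching `M` has the `M`-class-1 property
if `G + (2t-2)M` is class 1 for every integer `t ≥ 2`. -/
def MClass1Property (M : Set G.E) : Prop :=
  ∀ t : ℕ, 2 ≤ t → (G.addCopies M (2 * t - 2)).IsClass1

/-- An `r`-graph: an `r`-regular multigraph in which every odd set of vertices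
is left by at least `r` edges. -/
def IsRGraph (r : ℕ) : Prop :=
  G.IsRegular r ∧ ∀ X : Set G.V, Odd X.ncard → r ≤ (G.cut X).ncard

end Multigraph

section Aux19

private lemma decide_lt_flip19 {a b : ℕ} (h : a ≠ b) :
    decide (b < a) = ! decide (a < b) := by
  rcases Nat.lt_or_ge a b with h1 | h1
  · simp [h1, Nat.lt_asymm h1]
  · have h2 : b < a := lt_of_le_of_ne h1 (Ne.symm h)
    simp [h2, Nat.lt_asymm h2]

private lemma two_color19 {E : Type} [Finite E] (f g : Equiv.Perm E)
    (hf2 : ∀ e, f (f e) = e) (hg2 : ∀ e, g (g e) = e)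
    (hf : ∀ e, f e ≠ e) (hg : ∀ e, g e ≠ e) :
    ∃ c : E → Bool, (∀ e, c (f e) = ! c e) ∧ (∀ e, c (g e) = ! c e) := by
  classical
  obtain ⟨ι, hι⟩ : ∃ ι : E → ℕ, Function.Injective ι := exists_injective_nat E
  set π : Equiv.Perm E := f * g with hπ
  have hf1 : f * f = 1 := Equiv.ext hf2
  have hg1 : g * g = 1 := Equiv.ext hg2
  have hfinv : f⁻¹ = f := inv_eq_of_mul_eq_one_right hf1
  have hginv : g⁻¹ = g := inv_eq_of_mul_eq_one_right hg1
  have hπinv : π⁻¹ = g * f := by rw [hπ, mul_inv_rev, hfinv, hginv]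
  have hconjf : f * π * f⁻¹ = π⁻¹ := by
    rw [hπinv, hfinv, hπ]; ext x
    simp [Equiv.Perm.mul_apply, hf2]
  have hconjg : g * π * g⁻¹ = π⁻¹ := by
    rw [hπinv, hginv, hπ]; ext x
    simp [Equiv.Perm.mul_apply, hg2]
  have hkeyf : ∀ (k : ℤ) (x : E), f ((π ^ k) x) = (π ^ (-k)) (f x) := by
    intro k x
    have h1 : f * π ^ k * f⁻¹ = π ^ (-k) := by rw [← conj_zpow, hconjf, inv_zpow']
    have h2 := congrArg (fun (q : Equiv.Perm E) => q (f x)) h1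
    simpa [Equiv.Perm.mul_apply, hfinv, hf2] using h2
  have hkeyg : ∀ (k : ℤ) (x : E), g ((π ^ k) x) = (π ^ (-k)) (g x) := by
    intro k x
    have h1 : g * π ^ k * g⁻¹ = π ^ (-k) := by rw [← conj_zpow, hconjg, inv_zpow']
    have h2 := congrArg (fun (q : Equiv.Perm E) => q (g x)) h1
    simpa [Equiv.Perm.mul_apply, hginv, hg2] using h2
  have hge : ∀ e, g e = (π ^ (-1 : ℤ)) (f e) := by
    intro e
    rw [zpow_neg, zpow_one, hπinv]
    simp [Equiv.Perm.mul_apply, hf2]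
  have hns : ∀ e, ¬ π.SameCycle e (f e) := by
    rintro e ⟨k, hk⟩
    rcases Int.even_or_odd k with ⟨m, hm⟩ | ⟨m, hm⟩
    · apply hf ((π ^ m) e)
      calc f ((π ^ m) e) = (π ^ (-m)) (f e) := hkeyf m e
        _ = (π ^ (-m)) ((π ^ k) e) := by rw [hk]
        _ = (π ^ (-m + k)) e := by
              simp only [← Equiv.Perm.mul_apply, ← zpow_add]
        _ = (π ^ m) e := by rw [show -m + k = m by omega]
    · apply hg ((π ^ m) e)
      calc g ((π ^ m) e) = (π ^ (-m)) (g e) := hkeyg m e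
        _ = (π ^ (-m)) ((π ^ (-1 : ℤ)) ((π ^ k) e)) := by rw [hk, ← hge]
        _ = (π ^ (-m + (-1 + k))) e := by
              simp only [← Equiv.Perm.mul_apply, ← zpow_add]
        _ = (π ^ m) e := by rw [show -m + (-1 + k) = m by omega]
  letI st : Setoid E := ⟨π.SameCycle,
    ⟨fun x => Equiv.Perm.SameCycle.refl π x, fun h => h.symm, fun h1 h2 => h1.trans h2⟩⟩
  let rep : E → E := fun e => (Quotient.mk st e).out
  have hrep_cong : ∀ {a b : E}, π.SameCycle a b → rep a = rep b := fun h =>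
    congrArg Quotient.out (Quotient.sound h)
  have hrep_same : ∀ a, π.SameCycle (rep a) a := fun a =>
    Quotient.exact (Quotient.out_eq (Quotient.mk st a))
  have hrepne : ∀ e, rep e ≠ rep (f e) := by
    intro e hrepeq
    exact hns e ((hrep_same e).symm.trans (hrepeq.symm ▸ hrep_same (f e)))
  refine ⟨fun e => decide (ι (rep e) < ι (rep (f e))), fun e => ?_, fun e => ?_⟩
  · show decide (ι (rep (f e)) < ι (rep (f (f e)))) = ! decide (ι (rep e) < ι (rep (f e)))
    rw [hf2]
    exact decide_lt_flip19 (fun hh => hrepne e (hι hh))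
  · show decide (ι (rep (g e)) < ι (rep (f (g e)))) = ! decide (ι (rep e) < ι (rep (f e)))
    have h3 : rep (g e) = rep (f e) := hrep_cong
      ⟨1, by simp [hπ, zpow_one, Equiv.Perm.mul_apply, hg2]⟩
    have h4 : rep (f (g e)) = rep e := hrep_cong
      ⟨-1, by rw [zpow_neg, zpow_one, hπinv]; simp [Equiv.Perm.mul_apply, hf2, hg2]⟩
    rw [h3, h4]
    exact decide_lt_flip19 (fun hh => hrepne e (hι hh))

private lemma card_two_other19 {α : Type} {S : Set α} (h : Nat.card S = 2) {x : α}
    (hx : x ∈ S) : ∃! y, (y ∈ S ∧ y ≠ x) := by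
  rw [Nat.card_eq_two_iff] at h
  obtain ⟨a, b, hab, huniv⟩ := h
  have hmem : ∀ z : S, z = a ∨ z = b := by
    intro z
    have hz : z ∈ ({a, b} : Set S) := huniv ▸ Set.mem_univ z
    simpa using hz
  rcases hmem ⟨x, hx⟩ with hxa | hxb
  · have hax : a.1 = x := by rw [← hxa]
    refine ⟨b.1, ⟨b.2, fun hbx => hab (Subtype.ext (hax.trans hbx.symm))⟩, ?_⟩
    rintro y ⟨hyS, hyx⟩
    rcases hmem ⟨y, hyS⟩ with hya | hyb
    · exact absurd ((congrArg Subtype.val hya).trans hax) hyx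
    · rw [← hyb]
  · have hbx : b.1 = x := by rw [← hxb]
    refine ⟨a.1, ⟨a.2, fun hax => hab (Subtype.ext (hax.trans hbx.symm))⟩, ?_⟩
    rintro y ⟨hyS, hyx⟩
    rcases hmem ⟨y, hyS⟩ with hya | hyb
    · rw [← hya]
    · exact absurd ((congrArg Subtype.val hyb).trans hbx) hyx

end Aux19


section Graph19

private lemma card_nonmatching19 (G : Multigraph) (hcubic : G.IsRegular 3) {N' : Set G.E}
    (hN' : G.IsPerfectMatching N') (v : G.V) :
    Nat.card {e : G.E // G.Inc v e ∧ e ∉ N'} = 2 := by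
  classical
  have hdeg : Nat.card {e : G.E // G.Inc v e} = 3 := hcubic v
  set A : Set {e : G.E // G.Inc v e} := {x | x.1 ∈ N'} with hA
  obtain ⟨m, ⟨hmN, hmInc⟩, hmu⟩ := hN' v
  have h1 : Nat.card A = 1 := by
    rw [Nat.card_eq_one_iff_unique]
    refine ⟨⟨fun x y => ?_⟩, ⟨⟨⟨m, hmInc⟩, hmN⟩⟩⟩
    have hx : x.1.1 = m := hmu x.1.1 ⟨x.2, x.1.2⟩
    have hy : y.1.1 = m := hmu y.1.1 ⟨y.2, y.1.2⟩
    exact Subtype.ext (Subtype.ext (hx.trans hy.symm))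
  have h2 : Nat.card ↥(Aᶜ) = 2 := by
    have h3 := Set.ncard_add_ncard_compl A
    rw [hdeg] at h3
    have hA1 : A.ncard = 1 := by rw [← Nat.card_coe_set_eq]; exact h1
    rw [Nat.card_coe_set_eq]
    omega
  have heq : {e : G.E // G.Inc v e ∧ e ∉ N'} ≃ ↥(Aᶜ) :=
    { toFun := fun x => ⟨⟨x.1, x.2.1⟩, x.2.2⟩
      invFun := fun x => ⟨x.1.1, x.1.2, x.2⟩
      left_inv := fun x => rfl
      right_inv := fun x => rfl }
  rw [Nat.card_congr heq, h2]

private lemma coloring_of_bip19 (G : Multigraph) (hcubic : G.IsRegular 3) {N' : Set G.E}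
    (hN' : G.IsPerfectMatching N') (s : Set G.V)
    (hs : ∀ e : G.E, e ∉ N' → ¬(G.tail e ∈ s ↔ G.head e ∈ s)) :
    ∃ c : G.E → Fin 3, G.IsProperEdgeColoring c := by
  classical
  have hother : ∀ (v : G.V) (e : G.E), G.Inc v e → e ∉ N' →
      ∃ e', ((G.Inc v e' ∧ e' ∉ N') ∧ e' ≠ e) ∧
        ∀ y, ((G.Inc v y ∧ y ∉ N') ∧ y ≠ e) → y = e' :=
    fun v e h1 h2 => card_two_other19
      (S := {x : G.E | G.Inc v x ∧ x ∉ N'}) (card_nonmatching19 G hcubic hN' v) ⟨h1, h2⟩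
  choose oth hA hoth4 using hother
  have hoth1 : ∀ (v : G.V) (e : G.E) (hI : G.Inc v e) (hm : e ∉ N'),
      G.Inc v (oth v e hI hm) := fun v e a b => (hA v e a b).1.1
  have hoth2 : ∀ (v : G.V) (e : G.E) (hI : G.Inc v e) (hm : e ∉ N'),
      oth v e hI hm ∉ N' := fun v e a b => (hA v e a b).1.2
  have hoth3 : ∀ (v : G.V) (e : G.E) (hI : G.Inc v e) (hm : e ∉ N'),
      oth v e hI hm ≠ e := fun v e a b => (hA v e a b).2
  let bEnd : G.E → G.V := fun e => if G.tail e ∈ s then G.tail e else G.head e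
  let wEnd : G.E → G.V := fun e => if G.tail e ∈ s then G.head e else G.tail e
  have hbInc : ∀ e, G.Inc (bEnd e) e := by
    intro e; by_cases h : G.tail e ∈ s <;> simp [bEnd, h, Multigraph.Inc]
  have hwInc : ∀ e, G.Inc (wEnd e) e := by
    intro e; by_cases h : G.tail e ∈ s <;> simp [wEnd, h, Multigraph.Inc]
  have hbmem : ∀ e, e ∉ N' → bEnd e ∈ s := by
    intro e he; have := hs e he
    by_cases h : G.tail e ∈ s <;> simp [bEnd, h] <;> tauto
  have hwmem : ∀ e, e ∉ N' → wEnd e ∉ s := by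
    intro e he; have := hs e he
    by_cases h : G.tail e ∈ s <;> simp [wEnd, h] <;> tauto
  have hbEq : ∀ e v, e ∉ N' → G.Inc v e → v ∈ s → bEnd e = v := by
    intro e v he hInc hv
    have hcr := hs e he
    rcases hInc with h | h
    · have h1 : G.tail e ∈ s := by rwa [h]
      simp only [bEnd]; rw [if_pos h1]; exact h
    · have hh : G.head e ∈ s := by rwa [h]
      have h1 : G.tail e ∉ s := fun h2 => hcr ⟨fun _ => hh, fun _ => h2⟩
      simp only [bEnd]; rw [if_neg h1]; exact h
  have hwEq : ∀ e v, e ∉ N' → G.Inc v e → v ∉ s → wEnd e = v := by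
    intro e v he hInc hv
    have hcr := hs e he
    rcases hInc with h | h
    · have h1 : G.tail e ∉ s := by rwa [h]
      simp only [wEnd]; rw [if_neg h1]; exact h
    · have hh : G.head e ∉ s := by rwa [h]
      have h1 : G.tail e ∈ s := by
        by_contra h2
        exact hcr ⟨fun h3 => absurd h3 h2, fun h3 => absurd h3 hh⟩
      simp only [wEnd]; rw [if_pos h1]; exact h
  let F : {e : G.E // e ∉ N'} → {e : G.E // e ∉ N'} := fun e =>
    ⟨oth (bEnd e.1) e.1 (hbInc e.1) e.2, hoth2 (bEnd e.1) e.1 (hbInc e.1) e.2⟩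
  let Gg : {e : G.E // e ∉ N'} → {e : G.E // e ∉ N'} := fun e =>
    ⟨oth (wEnd e.1) e.1 (hwInc e.1) e.2, hoth2 (wEnd e.1) e.1 (hwInc e.1) e.2⟩
  have hFb : ∀ e : {e : G.E // e ∉ N'}, bEnd (F e).1 = bEnd e.1 := fun e =>
    hbEq (F e).1 (bEnd e.1) (F e).2 (hoth1 (bEnd e.1) e.1 (hbInc e.1) e.2) (hbmem e.1 e.2)
  have hGw : ∀ e : {e : G.E // e ∉ N'}, wEnd (Gg e).1 = wEnd e.1 := fun e =>
    hwEq (Gg e).1 (wEnd e.1) (Gg e).2 (hoth1 (wEnd e.1) e.1 (hwInc e.1) e.2) (hwmem e.1 e.2)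
  have hFinvol : Function.Involutive F := by
    intro e
    apply Subtype.ext
    refine (hoth4 (bEnd (F e).1) (F e).1 (hbInc (F e).1) (F e).2 e.1
      ⟨⟨?_, e.2⟩, Ne.symm (hoth3 (bEnd e.1) e.1 (hbInc e.1) e.2)⟩).symm
    rw [hFb e]; exact hbInc e.1
  have hGinvol : Function.Involutive Gg := by
    intro e
    apply Subtype.ext
    refine (hoth4 (wEnd (Gg e).1) (Gg e).1 (hwInc (Gg e).1) (Gg e).2 e.1
      ⟨⟨?_, e.2⟩, Ne.symm (hoth3 (wEnd e.1) e.1 (hwInc e.1) e.2)⟩).symm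
    rw [hGw e]; exact hwInc e.1
  have hFne : ∀ e, F e ≠ e := fun e h =>
    hoth3 (bEnd e.1) e.1 (hbInc e.1) e.2 (congrArg Subtype.val h)
  have hGne : ∀ e, Gg e ≠ e := fun e h =>
    hoth3 (wEnd e.1) e.1 (hwInc e.1) e.2 (congrArg Subtype.val h)
  obtain ⟨c₀, hcF, hcG⟩ := two_color19 hFinvol.toPerm hGinvol.toPerm
    (fun e => hFinvol e) (fun e => hGinvol e) hFne hGne
  refine ⟨fun e => if h : e ∈ N' then (0 : Fin 3) else (if c₀ ⟨e, h⟩ then 1 else 2), ?_⟩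
  rintro e e' ⟨hne, v, hIe, hIe'⟩
  by_cases h1 : e ∈ N' <;> by_cases h2 : e' ∈ N'
  · exfalso
    obtain ⟨m, hm, hmu⟩ := hN' v
    exact hne ((hmu e ⟨h1, hIe⟩).trans (hmu e' ⟨h2, hIe'⟩).symm)
  · simp only [dif_pos h1, dif_neg h2]
    cases hc : c₀ ⟨e', h2⟩ <;> simp [hc]
  · simp only [dif_neg h1, dif_pos h2]
    cases hc : c₀ ⟨e, h1⟩ <;> simp [hc]
  · simp only [dif_neg h1, dif_neg h2]
    have hkey : c₀ ⟨e', h2⟩ = ! c₀ ⟨e, h1⟩ := by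
      by_cases hv : v ∈ s
      · have hb1 : bEnd e = v := hbEq e v h1 hIe hv
        have hFe : F ⟨e, h1⟩ = ⟨e', h2⟩ := by
          apply Subtype.ext
          refine (hoth4 (bEnd e) e (hbInc e) h1 e' ⟨⟨?_, h2⟩, fun hh => hne hh.symm⟩).symm
          rw [hb1]; exact hIe'
        rw [← hFe]
        exact hcF ⟨e, h1⟩
      · have hw1 : wEnd e = v := hwEq e v h1 hIe hv
        have hGe : Gg ⟨e, h1⟩ = ⟨e', h2⟩ := by
          apply Subtype.ext
          refine (hoth4 (wEnd e) e (hwInc e) h1 e' ⟨⟨?_, h2⟩, fun hh => hne hh.symm⟩).symm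
          rw [hw1]; exact hIe'
        rw [← hGe]
        exact hcG ⟨e, h1⟩
    rw [hkey]
    cases hc : c₀ ⟨e, h1⟩ <;> simp [hc]

private lemma transfer19 (G : Multigraph) (M : Set G.E) (k : ℕ)
    (N : Set (G.addCopies M k).E) (hN : (G.addCopies M k).IsPerfectMatching N)
    (hbip : ((G.addCopies M k).deleteEdges N).IsBipartite) :
    ∃ N' : Set G.E, G.IsPerfectMatching N' ∧ (G.deleteEdges N').IsBipartite := by
  classical
  let H := G.addCopies M k
  let p : H.E → G.E := Sum.elim id (fun q => q.2.1)
  have hends : ∀ f : H.E, H.ends f = G.ends (p f) := by rintro (f | q) <;> rfl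
  have hInc : ∀ (v : G.V) (f : H.E), H.Inc v f ↔ G.Inc v (p f) := by
    intro v f
    unfold Multigraph.Inc Multigraph.tail Multigraph.head
    rw [hends]
    exact Iff.rfl
  refine ⟨p '' N, ?_, ?_⟩
  · intro v
    obtain ⟨f, ⟨hfN, hfInc⟩, hfu⟩ := hN v
    refine ⟨p f, ⟨⟨f, hfN, rfl⟩, (hInc v f).mp hfInc⟩, ?_⟩
    rintro y ⟨⟨f', hf'N, rfl⟩, hyInc⟩
    rw [hfu f' ⟨hf'N, (hInc v f').mpr hyInc⟩]
  · obtain ⟨s, hs⟩ := hbip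
    refine ⟨s, ?_⟩
    rintro ⟨e, he⟩
    have hinl : (Sum.inl e : H.E) ∉ N := fun h => he ⟨Sum.inl e, h, rfl⟩
    exact hs ⟨Sum.inl e, hinl⟩

private lemma class1_of_col19 (G : Multigraph) (hcubic : G.IsRegular 3)
    (c : G.E → Fin 3) (hc : G.IsProperEdgeColoring c) : G.IsClass1 := by
  classical
  rcases isEmpty_or_nonempty G.V with h | h
  · have hE : IsEmpty G.E := ⟨fun e => h.false (G.tail e)⟩
    unfold Multigraph.IsClass1 Multigraph.chromaticIndex Multigraph.maxDegree
    have h0 : (0 : ℕ) ∈ {k | ∃ c : G.E → Fin k, G.IsProperEdgeColoring c} :=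
      ⟨fun e => isEmptyElim e, fun e => isEmptyElim e⟩
    haveI := h
    have h2 : Set.range G.degree = ∅ := by
      ext x
      simp only [Set.mem_range, Set.mem_empty_iff_false, iff_false]
      rintro ⟨v, -⟩
      exact h.false v
    rw [Nat.sInf_eq_zero.mpr (Or.inl h0), h2, csSup_empty]
    rfl
  · haveI := h
    obtain ⟨v⟩ := h
    have hmax : G.maxDegree = 3 := by
      unfold Multigraph.maxDegree
      rw [show Set.range G.degree = {3} by
        rw [show G.degree = fun _ => 3 from funext hcubic]; exact Set.range_const]
      exact csSup_singleton 3
    have h3mem : (3 : ℕ) ∈ {k | ∃ c : G.E → Fin k, G.IsProperEdgeColoring c} := ⟨c, hc⟩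
    have hlb : ∀ k ∈ {k | ∃ c : G.E → Fin k, G.IsProperEdgeColoring c}, 3 ≤ k := by
      rintro k ⟨c', hc'⟩
      have hinj : Function.Injective (fun x : {e : G.E // G.Inc v e} => c' x.1) := by
        rintro ⟨e, he⟩ ⟨e', he'⟩ hcc
        by_contra hne
        exact hc' e e' ⟨fun hh => hne (Subtype.ext hh), v, he, he'⟩ hcc
      have hle := Nat.card_le_card_of_injective _ hinj
      have h5 : Nat.card {e : G.E // G.Inc v e} = 3 := hcubic v
      have h6 : Nat.card (Fin k) = k := by simp [Nat.card_eq_fintype_card]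
      omega
    unfold Multigraph.IsClass1
    rw [hmax]
    unfold Multigraph.chromaticIndex
    exact le_antisymm (Nat.sInf_le h3mem) (le_csInf ⟨3, h3mem⟩ hlb)

end Graph19


/-- let `G` be a cubic graph with a perfect matching `M` and let
`t ≥ 1`.  If `H = G + (2t-2)M` has a perfect matching `N` with `H - N`
bipartite, then `G` has a perfect matching `N'` with `G - N'` bipartite;
consequently `G` is class 1 (it admits a proper 3-edge-coloring). -/
theorem statement_19 (G : Multigraph) (hcubic : G.IsRegular 3) (M : Set G.E)
    (hM : G.IsPerfectMatching M) (t : ℕ) (ht : 1 ≤ t)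
    (N : Set (G.addCopies M (2 * t - 2)).E)
    (hN : (G.addCopies M (2 * t - 2)).IsPerfectMatching N)
    (hbip : ((G.addCopies M (2 * t - 2)).deleteEdges N).IsBipartite) :
    (∃ N' : Set G.E, G.IsPerfectMatching N' ∧ (G.deleteEdges N').IsBipartite) ∧
      G.IsClass1 ∧ ∃ c : G.E → Fin 3, G.IsProperEdgeColoring c := by
  obtain ⟨N', hN', hbip'⟩ := transfer19 G M (2 * t - 2) N hN hbip
  have hbip2 := hbip'
  obtain ⟨s, hs⟩ := hbip2
  have hs' : ∀ e : G.E, e ∉ N' → ¬(G.tail e ∈ s ↔ G.head e ∈ s) := fun e he => hs ⟨e, he⟩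
  obtain ⟨c, hc⟩ := coloring_of_bip19 G hcubic hN' s hs'
  exact ⟨⟨N', hN', hbip'⟩, class1_of_col19 G hcubic c hc, c, hc⟩
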